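/- Let q and λ be reals with 0 < λ < q ≤ 1, let K ≥ 1 be an integer, let B_1, ..., B_K be nonnegative reals with Σ_{k=1}^{K} B_k = 1, and let W_RE = λ(1−q)/(q(q−λ)). Then (W_RE + (Σ_{k=1}^{K} B_k · k · (k+1))/(2q)) / (W_RE + 1/q) ≤ (q−λ)K(K+1)/(2q(1−λ)) + λ(1−q)/(q(1−λ)). That is, the delay of random linear coding over an infinite field is at most this factor worse than the delay of retransmission. -/

import Mathlib

/-- The delay of random linear coding over an infinite field is at most a
factor `(q−λ)K(K+1)/(2q(1−λ)) + λ(1−q)/(q(1−λ))` worse than the delay of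
retransmission. -/
theorem rlc_delay_ratio_upper_bound (q lam : ℝ) (hlam : 0 < lam)
    (hlamq : lam < q) (hq : q ≤ 1) (K : ℕ) (hK : 1 ≤ K) (B : ℕ → ℝ)
    (hBnonneg : ∀ k ∈ Finset.Icc 1 K, 0 ≤ B k)
    (hBsum : ∑ k ∈ Finset.Icc 1 K, B k = 1) :
    (lam * (1 - q) / (q * (q - lam)) +
        (∑ k ∈ Finset.Icc 1 K, B k * (k : ℝ) * ((k : ℝ) + 1)) / (2 * q)) /
      (lam * (1 - q) / (q * (q - lam)) + 1 / q)
    ≤ (q - lam) * (K : ℝ) * ((K : ℝ) + 1) / (2 * q * (1 - lam)) +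
        lam * (1 - q) / (q * (1 - lam)) := by
  have hq0 : 0 < q := hlam.trans hlamq
  have hql : 0 < q - lam := by linarith
  have h1l : 0 < 1 - lam := by linarith
  have hW : 0 ≤ lam * (1 - q) / (q * (q - lam)) := by
    apply div_nonneg (by nlinarith) (by positivity)
  have hden : 0 < lam * (1 - q) / (q * (q - lam)) + 1 / q := by positivity
  have hsum : (∑ k ∈ Finset.Icc 1 K, B k * (k : ℝ) * ((k : ℝ) + 1))
      ≤ (K : ℝ) * ((K : ℝ) + 1) := by
    calc (∑ k ∈ Finset.Icc 1 K, B k * (k : ℝ) * ((k : ℝ) + 1))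
        ≤ ∑ k ∈ Finset.Icc 1 K, B k * ((K : ℝ) * ((K : ℝ) + 1)) := by
          apply Finset.sum_le_sum
          intro k hk
          have hkK : (k : ℝ) ≤ (K : ℝ) := by
            exact_mod_cast (Finset.mem_Icc.mp hk).2
          have hk0 : (0 : ℝ) ≤ (k : ℝ) := Nat.cast_nonneg k
          have hB := hBnonneg k hk
          have h1 : (0:ℝ) ≤ ((K:ℝ) - k) * ((K:ℝ) + k + 1) :=
            mul_nonneg (by linarith) (by linarith)
          nlinarith [mul_nonneg hB h1]
      _ = (K : ℝ) * ((K : ℝ) + 1) := by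
          rw [← Finset.sum_mul, hBsum, one_mul]
  have step1 : (lam * (1 - q) / (q * (q - lam)) +
        (∑ k ∈ Finset.Icc 1 K, B k * (k : ℝ) * ((k : ℝ) + 1)) / (2 * q)) /
      (lam * (1 - q) / (q * (q - lam)) + 1 / q)
      ≤ (lam * (1 - q) / (q * (q - lam)) +
        ((K : ℝ) * ((K : ℝ) + 1)) / (2 * q)) /
      (lam * (1 - q) / (q * (q - lam)) + 1 / q) := by
    gcongr
  refine step1.trans (le_of_eq ?_)
  rw [div_eq_iff hden.ne']
  field_simp
  ring
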